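/- Let K : ℂ → Matrix (Fin n) (Fin n) ℂ, B : ℂ → Matrix (Fin n) (Fin m) ℂ, N : ℂ → Matrix (Fin n) (Fin (n*m)) ℂ, H : ℂ → ℂ → Matrix (Fin n) (Fin (n*n)) ℂ, and σ ∈ ℂ with K(σ) and K(2σ) invertible. Define V₁ := K(σ)⁻¹B(σ) and V₂ := K(2σ)⁻¹(H(σ,σ)(V₁⊗V₁) + N(σ)(I_m⊗V₁)). Let V, W ∈ Matrix (Fin n) (Fin r) ℂ with V containing the columns of V₁ and V₂ in its column span and with WᴴK(σ)V and WᴴK(2σ)V invertible. Then the reduced states V̂₁ := K̂(σ)⁻¹B̂(σ) and V̂₂ := K̂(2σ)⁻¹(Ĥ(σ,σ)(V̂₁⊗V̂₁) + N̂(σ)(I_m⊗V̂₁)), where K̂(s)=WᴴK(s)V, B̂(s)=WᴴB(s), N̂(s)=WᴴN(s)(I_m⊗V), Ĥ(s₁,s₂)=WᴴH(s₁,s₂)(V⊗V), satisfy V * V̂₁ = V₁ and V * V̂₂ = V₂. -/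

import Mathlib

open Matrix Kronecker

theorem stmt_19 {n m r : ℕ}
    (K : ℂ → Matrix (Fin n) (Fin n) ℂ)
    (B : ℂ → Matrix (Fin n) (Fin m) ℂ)
    (N : ℂ → Matrix (Fin n) (Fin m × Fin n) ℂ)
    (H : ℂ → ℂ → Matrix (Fin n) (Fin n × Fin n) ℂ)
    (σ : ℂ) (hK1 : IsUnit (K σ)) (hK2 : IsUnit (K (2 * σ)))
    (V W : Matrix (Fin n) (Fin r) ℂ)
    (V₁ : Matrix (Fin n) (Fin m) ℂ) (hV₁ : V₁ = (K σ)⁻¹ * B σ)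
    (V₂ : Matrix (Fin n) (Fin m × Fin m) ℂ)
    (hV₂ : V₂ = (K (2 * σ))⁻¹ *
      (H σ σ * (V₁ ⊗ₖ V₁) + N σ * ((1 : Matrix (Fin m) (Fin m) ℂ) ⊗ₖ V₁)))
    (hVspan₁ : ∃ X, V * X = V₁) (hVspan₂ : ∃ X, V * X = V₂)
    (hKhat1 : IsUnit (Wᴴ * K σ * V)) (hKhat2 : IsUnit (Wᴴ * K (2 * σ) * V)) :
    let Khat : ℂ → Matrix (Fin r) (Fin r) ℂ := fun s => Wᴴ * K s * V
    let Bhat : ℂ → Matrix (Fin r) (Fin m) ℂ := fun s => Wᴴ * B s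
    let Nhat : ℂ → Matrix (Fin r) (Fin m × Fin r) ℂ :=
      fun s => Wᴴ * N s * ((1 : Matrix (Fin m) (Fin m) ℂ) ⊗ₖ V)
    let Hhat : ℂ → ℂ → Matrix (Fin r) (Fin r × Fin r) ℂ :=
      fun s₁ s₂ => Wᴴ * H s₁ s₂ * (V ⊗ₖ V)
    let V₁hat : Matrix (Fin r) (Fin m) ℂ := (Khat σ)⁻¹ * Bhat σ
    let V₂hat : Matrix (Fin r) (Fin m × Fin m) ℂ := (Khat (2 * σ))⁻¹ *
      (Hhat σ σ * (V₁hat ⊗ₖ V₁hat) +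
        Nhat σ * ((1 : Matrix (Fin m) (Fin m) ℂ) ⊗ₖ V₁hat))
    V * V₁hat = V₁ ∧ V * V₂hat = V₂ := by
  intro Khat Bhat Nhat Hhat V₁hat V₂hat
  obtain ⟨X₁, hX₁⟩ : ∃ X : Matrix (Fin r) (Fin m) ℂ, V * X = V₁ := hVspan₁
  obtain ⟨X₂, hX₂⟩ : ∃ X : Matrix (Fin r) (Fin m × Fin m) ℂ, V * X = V₂ := hVspan₂
  have hd1 : IsUnit (K σ).det := (Matrix.isUnit_iff_isUnit_det _).mp hK1
  have hd2 : IsUnit (K (2 * σ)).det := (Matrix.isUnit_iff_isUnit_det _).mp hK2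
  have hhd1 : IsUnit (Khat σ).det := (Matrix.isUnit_iff_isUnit_det _).mp hKhat1
  have hhd2 : IsUnit (Khat (2 * σ)).det := (Matrix.isUnit_iff_isUnit_det _).mp hKhat2
  -- K σ * V₁ = B σ
  have hKV₁ : K σ * V₁ = B σ := by
    rw [hV₁, ← Matrix.mul_assoc, Matrix.mul_nonsing_inv _ hd1, Matrix.one_mul]
  have hV₁hat : V₁hat = X₁ := by
    show (Khat σ)⁻¹ * (Wᴴ * B σ) = X₁
    rw [← hKV₁, ← hX₁]
    calc (Khat σ)⁻¹ * (Wᴴ * (K σ * (V * X₁)))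
        = (Khat σ)⁻¹ * (Khat σ * X₁) := by
          simp only [Khat, Matrix.mul_assoc]
      _ = X₁ := by rw [← Matrix.mul_assoc, Matrix.nonsing_inv_mul _ hhd1, Matrix.one_mul]
  have h1 : V * V₁hat = V₁ := by rw [hV₁hat, hX₁]
  refine ⟨h1, ?_⟩
  -- second level
  have hHterm : Hhat σ σ * (V₁hat ⊗ₖ V₁hat) = Wᴴ * (H σ σ * (V₁ ⊗ₖ V₁)) := by
    show Wᴴ * H σ σ * (V ⊗ₖ V) * (V₁hat ⊗ₖ V₁hat) = Wᴴ * (H σ σ * (V₁ ⊗ₖ V₁))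
    rw [Matrix.mul_assoc (Wᴴ * H σ σ), ← Matrix.mul_kronecker_mul, h1, Matrix.mul_assoc]
  have hNterm : Nhat σ * ((1 : Matrix (Fin m) (Fin m) ℂ) ⊗ₖ V₁hat)
      = Wᴴ * (N σ * ((1 : Matrix (Fin m) (Fin m) ℂ) ⊗ₖ V₁)) := by
    show Wᴴ * N σ * ((1 : Matrix (Fin m) (Fin m) ℂ) ⊗ₖ V) *
        ((1 : Matrix (Fin m) (Fin m) ℂ) ⊗ₖ V₁hat) = _
    rw [Matrix.mul_assoc (Wᴴ * N σ), ← Matrix.mul_kronecker_mul, h1, Matrix.one_mul,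
      Matrix.mul_assoc]
  have hKV₂ : K (2 * σ) * V₂ = H σ σ * (V₁ ⊗ₖ V₁) + N σ * ((1 : Matrix (Fin m) (Fin m) ℂ) ⊗ₖ V₁) := by
    rw [hV₂, ← Matrix.mul_assoc, Matrix.mul_nonsing_inv _ hd2, Matrix.one_mul]
  have hV₂hat : V₂hat = X₂ := by
    show (Khat (2 * σ))⁻¹ * (Hhat σ σ * (V₁hat ⊗ₖ V₁hat) +
        Nhat σ * ((1 : Matrix (Fin m) (Fin m) ℂ) ⊗ₖ V₁hat)) = X₂
    rw [hHterm, hNterm, ← Matrix.mul_add, ← hKV₂, ← hX₂]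
    calc (Khat (2 * σ))⁻¹ * (Wᴴ * (K (2 * σ) * (V * X₂)))
        = (Khat (2 * σ))⁻¹ * (Khat (2 * σ) * X₂) := by
          simp only [Khat, Matrix.mul_assoc]
      _ = X₂ := by rw [← Matrix.mul_assoc, Matrix.nonsing_inv_mul _ hhd2, Matrix.one_mul]
  rw [hV₂hat, hX₂]
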